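/- arXiv:2603.00410 — 3 statements merged into one kernel-verified Lean document; each statement's English description precedes it below -/
import Mathlib

section
/- Let m be a positive integer and let (H_1, ω_1), ..., (H_m, ω_m) be i.i.d. random pairs taking values in {0,1} × {0,1}, with Pr(ω_1 = 1) > 0. Then the conditional expectation of the ratio (Σ_{i=1}^m (1 − H_i) ω_i) / (Σ_{i=1}^m ω_i), given the event {Σ_{i=1}^m ω_i > 0}, equals the conditional probability Pr(H_1 = 0 | ω_1 = 1). -/
open MeasureTheory ProbabilityTheory

/-- For i.i.d. pairs `(Hᵢ, ωᵢ)` with values in `{0,1} × {0,1}` and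
`Pr(ω₁ = 1) > 0`, the conditional expectation of `(∑ (1 - Hᵢ) ωᵢ) / (∑ ωᵢ)` given
`{∑ ωᵢ > 0}` equals `Pr(H₁ = 0 ∣ ω₁ = 1)`. -/
theorem fdr_eq_posterior
    {Ω : Type*} [MeasurableSpace Ω] (Pr : Measure Ω) [IsProbabilityMeasure Pr]
    (m : ℕ) (hm : 0 < m)
    (H W : Fin m → Ω → ℝ)
    (hHmeas : ∀ i, Measurable (H i)) (hWmeas : ∀ i, Measurable (W i))
    (hH01 : ∀ i ω, H i ω = 0 ∨ H i ω = 1)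
    (hW01 : ∀ i ω, W i ω = 0 ∨ W i ω = 1)
    (hindep : iIndepFun
      (fun i ω => (H i ω, W i ω)) Pr)
    (hident : ∀ i, IdentDistrib (fun ω => (H i ω, W i ω))
      (fun ω => (H ⟨0, hm⟩ ω, W ⟨0, hm⟩ ω)) Pr Pr)
    (hpos : 0 < Pr {ω | W ⟨0, hm⟩ ω = 1}) :
    ∫ ω, (∑ i, (1 - H i ω) * W i ω) / (∑ i, W i ω)
        ∂(ProbabilityTheory.cond Pr {ω | 0 < ∑ i, W i ω})
      = (ProbabilityTheory.cond Pr {ω | W ⟨0, hm⟩ ω = 1} {ω | H ⟨0, hm⟩ ω = 0}).toReal := by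
  classical
  set i0 : Fin m := ⟨0, hm⟩ with hi0
  set X : Fin m → Ω → ℝ × ℝ := fun i ω => (H i ω, W i ω) with hX
  have hXmeas : ∀ i, Measurable (X i) := fun i => (hHmeas i).prodMk (hWmeas i)
  have hW0 : ∀ i ω, 0 ≤ W i ω := fun i ω => by rcases hW01 i ω with h | h <;> simp [h]
  have hW1 : ∀ i ω, W i ω ≤ 1 := fun i ω => by rcases hW01 i ω with h | h <;> simp [h]
  -- the tail sums
  set T : Fin m → Ω → ℝ := fun i ω => ∑ j ∈ Finset.univ.erase i, W j ω with hT
  have hT0 : ∀ i ω, 0 ≤ T i ω := fun i ω => Finset.sum_nonneg fun j _ => hW0 j ω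
  have hTmeas : ∀ i, Measurable (T i) :=
    fun i => Finset.measurable_sum _ fun j _ => hWmeas j
  have hRT : ∀ i ω, (∑ j, W j ω) = W i ω + T i ω := fun i ω =>
    (Finset.add_sum_erase _ _ (Finset.mem_univ i)).symm
  have h1T_pos : ∀ i ω, 0 < 1 + T i ω := fun i ω => by linarith [hT0 i ω]
  have h1T_le : ∀ i ω, 1 + T i ω ≤ (m : ℝ) := by
    intro i ω
    have h1 : T i ω ≤ (Finset.univ.erase i).card • (1 : ℝ) :=
      Finset.sum_le_card_nsmul _ _ 1 fun j _ => hW1 j ω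
    have h2 : (Finset.univ.erase i).card = m - 1 := by
      simp [Finset.card_erase_of_mem]
    rw [h2, nsmul_eq_mul, mul_one] at h1
    have h3 : ((m - 1 : ℕ) : ℝ) = (m : ℝ) - 1 := by
      rw [Nat.cast_sub hm]; simp
    linarith [h1, h3.le, h3.ge]
  -- independence of the pair (H i, W i) from the tail sum T i
  have hindepXT : ∀ i, IndepFun (X i) (T i) Pr := by
    intro i
    have h := hindep.indepFun_finset {i} (Finset.univ.erase i)
      (by simp) hXmeas
    have h2 := h.comp
      (φ := fun v : ({i} : Finset (Fin m)) → ℝ × ℝ => v ⟨i, by simp⟩)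
      (ψ := fun v : ↥(Finset.univ.erase i) → ℝ × ℝ => ∑ j, (v j).2)
      (_mγ := inferInstance)
      (measurable_pi_apply _)
      (Finset.measurable_sum _ fun j _ => (measurable_pi_apply j).snd)
    have e1 : (fun v : ({i} : Finset (Fin m)) → ℝ × ℝ => v ⟨i, by simp⟩) ∘
        (fun a (j : ({i} : Finset (Fin m))) => X j a) = X i := rfl
    have e2 : (fun v : ↥(Finset.univ.erase i) → ℝ × ℝ => ∑ j, (v j).2) ∘
        (fun a (j : (Finset.univ.erase i : Finset (Fin m))) => X j a) = T i := by
      funext ω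
      simp only [Function.comp, hT]
      exact Finset.sum_coe_sort (Finset.univ.erase i) (fun j => W j ω)
    rwa [e1, e2] at h2
  -- the main product-integral identity
  have hmain : ∀ (i : Fin m) (s : Set (ℝ × ℝ)), MeasurableSet s →
      ∫ ω, s.indicator (fun _ => (1 : ℝ)) (X i ω) * (1 + T i ω)⁻¹ ∂Pr
        = (Pr (X i0 ⁻¹' s)).toReal * ∫ ω, (1 + T i ω)⁻¹ ∂Pr := by
    intro i s hs
    have hind : IndepFun (fun ω => s.indicator (fun _ => (1 : ℝ)) (X i ω))
        (fun ω => (1 + T i ω)⁻¹) Pr :=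
      (hindepXT i).comp (measurable_const.indicator hs)
        ((measurable_const.add measurable_id).inv)
    have hInt := hind.integral_fun_mul_eq_mul_integral
      ((measurable_const.indicator hs).comp (hXmeas i)).aestronglyMeasurable
      (((measurable_const.add measurable_id).inv).comp (hTmeas i)).aestronglyMeasurable
    have hre : (fun ω => s.indicator (fun _ => (1 : ℝ)) (X i ω)) =
        (X i ⁻¹' s).indicator (fun _ => (1 : ℝ)) := by
      funext ω
      by_cases h : X i ω ∈ s <;> simp [Set.indicator, h]
    have hInd : ∫ ω, s.indicator (fun _ => (1 : ℝ)) (X i ω) ∂Pr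
        = (Pr (X i ⁻¹' s)).toReal := by
      rw [hre]
      exact integral_indicator_one ((hXmeas i) hs)
    have hId : Pr (X i ⁻¹' s) = Pr (X i0 ⁻¹' s) := (hident i).measure_mem_eq hs
    calc ∫ ω, s.indicator (fun _ => (1 : ℝ)) (X i ω) * (1 + T i ω)⁻¹ ∂Pr
        = (∫ ω, s.indicator (fun _ => (1 : ℝ)) (X i ω) ∂Pr) * ∫ ω, (1 + T i ω)⁻¹ ∂Pr := hInt
      _ = (Pr (X i0 ⁻¹' s)).toReal * ∫ ω, (1 + T i ω)⁻¹ ∂Pr := by rw [hInd, hId]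
  -- the two key sets
  set sA : Set (ℝ × ℝ) := {0} ×ˢ {1} with hsA
  set sB : Set (ℝ × ℝ) := Set.univ ×ˢ {1} with hsB
  have hsAmeas : MeasurableSet sA := (measurableSet_singleton 0).prod (measurableSet_singleton 1)
  have hsBmeas : MeasurableSet sB := MeasurableSet.univ.prod (measurableSet_singleton 1)
  set p : ENNReal := Pr (X i0 ⁻¹' sA) with hp
  set q : ENNReal := Pr (X i0 ⁻¹' sB) with hq
  set c : Fin m → ℝ := fun i => ∫ ω, (1 + T i ω)⁻¹ ∂Pr with hc
  -- pointwise identities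
  have key1 : ∀ i ω, (1 - H i ω) * W i ω / (∑ j, W j ω)
      = sA.indicator (fun _ => (1 : ℝ)) (X i ω) * (1 + T i ω)⁻¹ := by
    intro i ω
    rcases hW01 i ω with h | h
    · have : X i ω ∉ sA := by simp [hsA, hX, h]
      simp [h, this]
    · rw [hRT i ω, h]
      rcases hH01 i ω with hh | hh
      · have : X i ω ∈ sA := by simp [hsA, hX, h, hh]
        simp [hh, this, div_eq_mul_inv]
      · have : X i ω ∉ sA := by simp [hsA, hX, hh]
        simp [hh, this]
  have key2 : ∀ i ω, W i ω / (∑ j, W j ω)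
      = sB.indicator (fun _ => (1 : ℝ)) (X i ω) * (1 + T i ω)⁻¹ := by
    intro i ω
    rcases hW01 i ω with h | h
    · have : X i ω ∉ sB := by simp [hsB, hX, h]
      simp [h, this]
    · have : X i ω ∈ sB := by simp [hsB, hX, h]
      rw [hRT i ω, h]
      simp [this, div_eq_mul_inv]
  -- integrability of all summands
  have hIntegr : ∀ (s : Set (ℝ × ℝ)), MeasurableSet s → ∀ i,
      Integrable (fun ω => s.indicator (fun _ => (1 : ℝ)) (X i ω) * (1 + T i ω)⁻¹) Pr := by
    intro s hs i
    apply (integrable_const (1 : ℝ)).mono'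
      (((measurable_const.indicator hs).comp (hXmeas i)).mul
        ((measurable_const.add measurable_id).inv.comp (hTmeas i))).aestronglyMeasurable
    refine Filter.Eventually.of_forall fun ω => ?_
    have h1 : (0 : ℝ) ≤ s.indicator (fun _ => (1 : ℝ)) (X i ω) :=
      Set.indicator_nonneg (fun _ _ => zero_le_one) _
    have h2 : s.indicator (fun _ => (1 : ℝ)) (X i ω) ≤ 1 := by
      by_cases hmem : X i ω ∈ s <;> simp [hmem]
    have h3 : (0 : ℝ) ≤ (1 + T i ω)⁻¹ := inv_nonneg.2 (h1T_pos i ω).le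
    have h4 : (1 + T i ω)⁻¹ ≤ 1 := by
      rw [inv_le_one_iff₀]; right; linarith [hT0 i ω]
    show ‖s.indicator (fun _ => (1 : ℝ)) (X i ω) * (1 + T i ω)⁻¹‖ ≤ 1
    rw [Real.norm_eq_abs, abs_of_nonneg (mul_nonneg h1 h3)]
    calc s.indicator (fun _ => (1 : ℝ)) (X i ω) * (1 + T i ω)⁻¹
        ≤ 1 * 1 := mul_le_mul h2 h4 h3 zero_le_one
      _ = 1 := by ring
  -- integral of the numerator term
  have hIntA : ∫ ω, (∑ i, (1 - H i ω) * W i ω) / (∑ j, W j ω) ∂Pr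
      = p.toReal * ∑ i, c i := by
    have : (fun ω => (∑ i, (1 - H i ω) * W i ω) / (∑ j, W j ω))
        = fun ω => ∑ i, sA.indicator (fun _ => (1 : ℝ)) (X i ω) * (1 + T i ω)⁻¹ := by
      funext ω
      rw [Finset.sum_div]
      exact Finset.sum_congr rfl fun i _ => key1 i ω
    rw [this, integral_finset_sum _ fun i _ => hIntegr sA hsAmeas i]
    rw [Finset.mul_sum]
    exact Finset.sum_congr rfl fun i _ => hmain i sA hsAmeas
  -- the measure of the conditioning event
  have hSmeas : MeasurableSet {ω | 0 < ∑ i, W i ω} :=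
    measurableSet_lt measurable_const (Finset.measurable_sum _ fun i _ => hWmeas i)
  have hPS : (Pr {ω | 0 < ∑ i, W i ω}).toReal = q.toReal * ∑ i, c i := by
    have h1 : (Pr {ω | 0 < ∑ i, W i ω}).toReal
        = ∫ ω, {ω | 0 < ∑ i, W i ω}.indicator (fun _ => (1 : ℝ)) ω ∂Pr :=
      (integral_indicator_one hSmeas).symm
    have h2 : (fun ω => {ω | 0 < ∑ i, W i ω}.indicator (fun _ => (1 : ℝ)) ω)
        = fun ω => ∑ i, sB.indicator (fun _ => (1 : ℝ)) (X i ω) * (1 + T i ω)⁻¹ := by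
      funext ω
      have : ∑ i, sB.indicator (fun _ => (1 : ℝ)) (X i ω) * (1 + T i ω)⁻¹
          = (∑ i, W i ω) / (∑ j, W j ω) := by
        rw [Finset.sum_div]
        exact (Finset.sum_congr rfl fun i _ => key2 i ω).symm
      rw [this]
      by_cases h : 0 < ∑ i, W i ω
      · have hmem : ω ∈ {ω | 0 < ∑ i, W i ω} := h
        rw [Set.indicator_of_mem hmem, div_self (ne_of_gt h)]
      · have h0 : (∑ i, W i ω) = 0 :=
          le_antisymm (not_lt.1 h) (Finset.sum_nonneg fun i _ => hW0 i ω)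
        have hmem : ω ∉ {ω | 0 < ∑ i, W i ω} := h
        rw [Set.indicator_of_notMem hmem, h0, zero_div]
    rw [h1, h2, integral_finset_sum _ fun i _ => hIntegr sB hsBmeas i, Finset.mul_sum]
    exact Finset.sum_congr rfl fun i _ => hmain i sB hsBmeas
  -- positivity facts
  have hcpos : ∀ i, 0 < c i := by
    intro i
    have hle : ∀ ω, ((m : ℝ))⁻¹ ≤ (1 + T i ω)⁻¹ := by
      intro ω
      exact inv_anti₀ (h1T_pos i ω) (h1T_le i ω)
    have hInt : Integrable (fun ω => (1 + T i ω)⁻¹) Pr := by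
      apply (integrable_const (1 : ℝ)).mono'
        ((measurable_const.add measurable_id).inv.comp (hTmeas i)).aestronglyMeasurable
      refine Filter.Eventually.of_forall fun ω => ?_
      show ‖(1 + T i ω)⁻¹‖ ≤ 1
      calc ‖(1 + T i ω)⁻¹‖ = (1 + T i ω)⁻¹ :=
            Real.norm_of_nonneg (inv_nonneg.2 (h1T_pos i ω).le)
        _ ≤ 1 := by rw [inv_le_one_iff₀]; right; linarith [hT0 i ω]
    have hmpos : (0 : ℝ) < (m : ℝ)⁻¹ := by positivity
    have : ((m : ℝ))⁻¹ = ∫ _ω, ((m : ℝ))⁻¹ ∂Pr := by simp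
    calc (0 : ℝ) < ((m : ℝ))⁻¹ := hmpos
      _ = ∫ _ω, ((m : ℝ))⁻¹ ∂Pr := this
      _ ≤ ∫ ω, (1 + T i ω)⁻¹ ∂Pr := integral_mono (integrable_const _) hInt hle
  have hsumc : 0 < ∑ i, c i :=
    Finset.sum_pos (fun i _ => hcpos i) ⟨i0, Finset.mem_univ i0⟩
  -- identification of q with Pr {W i0 = 1}
  have hqB : X i0 ⁻¹' sB = {ω | W i0 ω = 1} := by
    ext ω; simp [hsB, hX, eq_comm]
  have hqpos : 0 < q := by rw [hq, hqB]; exact hpos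
  have hqlt : q < ⊤ := lt_of_le_of_lt prob_le_one (by norm_num)
  have hqR : 0 < q.toReal := ENNReal.toReal_pos hqpos.ne' hqlt.ne
  -- Pr S > 0
  have hPSpos : 0 < (Pr {ω | 0 < ∑ i, W i ω}).toReal := by
    rw [hPS]; positivity
  -- compute the RHS
  have hAB : X i0 ⁻¹' sA = {ω | W i0 ω = 1} ∩ {ω | H i0 ω = 0} := by
    ext ω; simp [hsA, hX]; tauto
  have hBmeas : MeasurableSet {ω | W i0 ω = 1} := (hWmeas i0) (measurableSet_singleton 1)
  have hRHS : (ProbabilityTheory.cond Pr {ω | W i0 ω = 1} {ω | H i0 ω = 0}).toReal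
      = p.toReal / q.toReal := by
    rw [ProbabilityTheory.cond_apply hBmeas]
    rw [ENNReal.toReal_mul, ENNReal.toReal_inv]
    rw [hp, hAB, hq, hqB]
    ring
  -- compute the LHS
  have hzero : ∀ ω ∉ {ω | 0 < ∑ i, W i ω},
      (∑ i, (1 - H i ω) * W i ω) / (∑ i, W i ω) = 0 := by
    intro ω hω
    have h0 : (∑ i, W i ω) = 0 :=
      le_antisymm (not_lt.1 hω) (Finset.sum_nonneg fun i _ => hW0 i ω)
    rw [h0, div_zero]
  rw [ProbabilityTheory.cond, integral_smul_measure,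
    setIntegral_eq_integral_of_forall_compl_eq_zero hzero]
  rw [hIntA, hRHS]
  rw [smul_eq_mul, ENNReal.toReal_inv]
  rw [show (Pr {ω | 0 < ∑ i, W i ω}).toReal = q.toReal * ∑ i, c i from hPS] at hPSpos ⊢
  field_simp
end

section
/- Let 0 ≤ λ < α ≤ 1 and let (P_1, δ_1), ..., (P_m, δ_m) be i.i.d. random pairs with P_i taking values in [0,1] and δ_i taking values in {0,1}, such that Pr(P_1 ≤ α, δ_1 = 1) > 0. Define the estimator FDR̂ = (α/(α−λ)) · (Σ_{i=1}^m 1_{(λ,α]}(P_i) δ_i) / (Σ_{i=1}^m 1_{[0,α]}(P_i) δ_i). Then the conditional expectation of FDR̂ given the event {Σ_{i=1}^m 1_{[0,α]}(P_i) δ_i > 0} equals (α/(α−λ)) · Pr(λ < P_1 ≤ α | P_1 ≤ α, δ_1 = 1). -/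
open MeasureTheory ProbabilityTheory Finset

lemma fdr_aux_count_ratio {Ω : Type*} [MeasurableSpace Ω] (Pr : Measure Ω)
    [IsProbabilityMeasure Pr] {m : ℕ} (X Y : Fin m → Ω → ℝ)
    (hXm : ∀ i, Measurable (X i)) (hYm : ∀ i, Measurable (Y i))
    (hX01 : ∀ i ω, X i ω = 0 ∨ X i ω = 1) (hY01 : ∀ i ω, Y i ω = 0 ∨ Y i ω = 1)
    (hYX : ∀ i ω, Y i ω = 1 → X i ω = 1)
    (hindY : ∀ i, IndepFun (Y i) (fun ω => (1 + ∑ j ∈ univ.erase i, X j ω)⁻¹) Pr)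
    (hindX : ∀ i, IndepFun (X i) (fun ω => (1 + ∑ j ∈ univ.erase i, X j ω)⁻¹) Pr)
    (pX pY : ℝ) (hpX : ∀ i, ∫ ω, X i ω ∂Pr = pX) (hpY : ∀ i, ∫ ω, Y i ω ∂Pr = pY)
    (hpXpos : 0 < pX) :
    ∫ ω in {ω | 0 < ∑ i, X i ω}, (∑ i, Y i ω) / (∑ i, X i ω) ∂Pr
      = pY / pX * (Pr {ω | 0 < ∑ i, X i ω}).toReal := by
  classical
  set S : Ω → ℝ := fun ω => ∑ i, X i ω with hSdef
  set T : Fin m → Ω → ℝ := fun i ω => ∑ j ∈ univ.erase i, X j ω with hTdef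
  have hX0 : ∀ i ω, 0 ≤ X i ω := fun i ω => by rcases hX01 i ω with h | h <;> simp [h]
  have hX1 : ∀ i ω, X i ω ≤ 1 := fun i ω => by rcases hX01 i ω with h | h <;> simp [h]
  have hY0 : ∀ i ω, 0 ≤ Y i ω := fun i ω => by rcases hY01 i ω with h | h <;> simp [h]
  have hY1 : ∀ i ω, Y i ω ≤ 1 := fun i ω => by rcases hY01 i ω with h | h <;> simp [h]
  have hSm : Measurable S := Finset.measurable_sum _ fun i _ => hXm i
  have hTm : ∀ i, Measurable (T i) := fun i => Finset.measurable_sum _ fun j _ => hXm j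
  have hT0 : ∀ i ω, 0 ≤ T i ω := fun i ω => Finset.sum_nonneg fun j _ => hX0 j ω
  have hT1 : ∀ i ω, (1:ℝ) ≤ 1 + T i ω := fun i ω => by linarith [hT0 i ω]
  have measA : MeasurableSet {ω | 0 < S ω} := measurableSet_lt measurable_const hSm
  have hSsplit : ∀ i ω, S ω = X i ω + T i ω := fun i ω =>
    (Finset.add_sum_erase _ _ (mem_univ i)).symm
  have hSone : ∀ i ω, X i ω = 1 → S ω = 1 + T i ω := by
    intro i ω h; rw [hSsplit i ω, h]
  -- pointwise identities
  have hptY : ∀ ω, Set.indicator {ω | 0 < S ω} (fun ω => (∑ i, Y i ω) / S ω) ω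
      = ∑ i, Y i ω * (1 + T i ω)⁻¹ := by
    intro ω
    by_cases hA : ω ∈ {ω | 0 < S ω}
    · rw [Set.indicator_of_mem hA, Finset.sum_div]
      refine Finset.sum_congr rfl fun i _ => ?_
      rcases hY01 i ω with h | h
      · simp [h]
      · rw [h, hSone i ω (hYX i ω h), one_mul, one_div]
    · rw [Set.indicator_of_notMem hA]
      symm
      refine Finset.sum_eq_zero fun i _ => ?_
      rcases hY01 i ω with h | h
      · simp [h]
      · exact absurd (lt_of_lt_of_le one_pos
          ((hSone i ω (hYX i ω h)) ▸ hT1 i ω)) hA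
  have hptX : ∀ ω, Set.indicator {ω | 0 < S ω} (1 : Ω → ℝ) ω
      = ∑ i, X i ω * (1 + T i ω)⁻¹ := by
    intro ω
    by_cases hA : ω ∈ {ω | 0 < S ω}
    · rw [Set.indicator_of_mem hA, Pi.one_apply]
      have : ∀ i ∈ univ, X i ω * (1 + T i ω)⁻¹ = X i ω / S ω := by
        intro i _
        rcases hX01 i ω with h | h
        · simp [h]
        · rw [h, hSone i ω h, one_mul, one_div]
      rw [Finset.sum_congr rfl this, ← Finset.sum_div]
      exact (div_self (ne_of_gt hA)).symm
    · rw [Set.indicator_of_notMem hA]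
      symm
      refine Finset.sum_eq_zero fun i _ => ?_
      rcases hX01 i ω with h | h
      · simp [h]
      · exact absurd (lt_of_lt_of_le one_pos
          ((hSone i ω h) ▸ hT1 i ω)) hA
  -- measurability / integrability of products
  have hinvm : ∀ i, Measurable fun ω => (1 + T i ω)⁻¹ := fun i =>
    (measurable_const.add (hTm i)).inv
  have hinv0 : ∀ i ω, 0 ≤ (1 + T i ω)⁻¹ := fun i ω => inv_nonneg.2 (by linarith [hT0 i ω])
  have hinv1 : ∀ i ω, (1 + T i ω)⁻¹ ≤ 1 := fun i ω => inv_le_one_of_one_le₀ (hT1 i ω)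
  have hbound : ∀ (f : Fin m → Ω → ℝ), (∀ i ω, 0 ≤ f i ω) → (∀ i ω, f i ω ≤ 1) →
      (∀ i, Measurable (f i)) →
      ∀ i, Integrable (fun ω => f i ω * (1 + T i ω)⁻¹) Pr := by
    intro f hf0 hf1 hfm i
    refine (integrable_const (1:ℝ)).mono'
      ((hfm i).mul (hinvm i)).aestronglyMeasurable (ae_of_all _ fun ω => ?_)
    rw [Real.norm_eq_abs, abs_of_nonneg (mul_nonneg (hf0 i ω) (hinv0 i ω))]
    exact mul_le_one₀ (hf1 i ω) (hinv0 i ω) (hinv1 i ω)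
  have hmul : ∀ (f : Fin m → Ω → ℝ), (∀ i, Measurable (f i)) →
      (∀ i, IndepFun (f i) (fun ω => (1 + T i ω)⁻¹) Pr) →
      ∀ i, ∫ ω, f i ω * (1 + T i ω)⁻¹ ∂Pr
        = (∫ ω, f i ω ∂Pr) * ∫ ω, (1 + T i ω)⁻¹ ∂Pr := by
    intro f hfm hfi i
    exact (hfi i).integral_fun_mul_eq_mul_integral (hfm i).aestronglyMeasurable (hinvm i).aestronglyMeasurable
  set E : ℝ := ∑ i, ∫ ω, (1 + T i ω)⁻¹ ∂Pr with hEdef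
  have hIY : ∫ ω in {ω | 0 < S ω}, (∑ i, Y i ω) / S ω ∂Pr = pY * E := by
    rw [← integral_indicator measA, integral_congr_ae (ae_of_all _ hptY),
      integral_finset_sum _ fun i _ => hbound Y hY0 hY1 hYm i]
    rw [hEdef, Finset.mul_sum]
    exact Finset.sum_congr rfl fun i _ => by rw [hmul Y hYm hindY i, hpY i]
  have hIX : (Pr {ω | 0 < S ω}).toReal = pX * E := by
    rw [← measureReal_def, ← integral_indicator_one measA, integral_congr_ae (ae_of_all _ hptX),
      integral_finset_sum _ fun i _ => hbound X hX0 hX1 hXm i]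
    rw [hEdef, Finset.mul_sum]
    exact Finset.sum_congr rfl fun i _ => by rw [hmul X hXm hindX i, hpX i]
    
  rw [hIY, hIX]
  field_simp
/-- For i.i.d. pairs `(Pᵢ, δᵢ)` with `Pᵢ ∈ [0,1]`, `δᵢ ∈ {0,1}` and
`Pr(P₁ ≤ α, δ₁ = 1) > 0`, the conditional expectation of
`FDR̂ = (α/(α−λ)) ∑ 1_{(λ,α]}(Pᵢ)δᵢ / ∑ 1_{[0,α]}(Pᵢ)δᵢ` given
`{∑ 1_{[0,α]}(Pᵢ)δᵢ > 0}` equals `(α/(α−λ)) Pr(λ < P₁ ≤ α ∣ P₁ ≤ α, δ₁ = 1)`. -/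
theorem expectation_fdr_estimator
    {Ω : Type*} [MeasurableSpace Ω] (Pr : Measure Ω) [IsProbabilityMeasure Pr]
    (lam α : ℝ) (hlam : 0 ≤ lam) (hla : lam < α) (hα : α ≤ 1)
    (m : ℕ) (hm : 0 < m)
    (P D : Fin m → Ω → ℝ)
    (hPmeas : ∀ i, Measurable (P i)) (hDmeas : ∀ i, Measurable (D i))
    (hP01 : ∀ i ω, P i ω ∈ Set.Icc (0 : ℝ) 1)
    (hD01 : ∀ i ω, D i ω = 0 ∨ D i ω = 1)
    (hindep : iIndepFun
      (fun i ω => (P i ω, D i ω)) Pr)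
    (hident : ∀ i, IdentDistrib (fun ω => (P i ω, D i ω))
      (fun ω => (P ⟨0, hm⟩ ω, D ⟨0, hm⟩ ω)) Pr Pr)
    (hpos : 0 < Pr {ω | P ⟨0, hm⟩ ω ≤ α ∧ D ⟨0, hm⟩ ω = 1}) :
    ∫ ω, (α / (α - lam)) *
        ((∑ i, (if lam < P i ω ∧ P i ω ≤ α then (1 : ℝ) else 0) * D i ω) /
          (∑ i, (if 0 ≤ P i ω ∧ P i ω ≤ α then (1 : ℝ) else 0) * D i ω))
        ∂(ProbabilityTheory.cond Pr
          {ω | 0 < ∑ i, (if 0 ≤ P i ω ∧ P i ω ≤ α then (1 : ℝ) else 0) * D i ω})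
      = (α / (α - lam)) *
        (ProbabilityTheory.cond Pr {ω | P ⟨0, hm⟩ ω ≤ α ∧ D ⟨0, hm⟩ ω = 1}
          {ω | lam < P ⟨0, hm⟩ ω ∧ P ⟨0, hm⟩ ω ≤ α}).toReal := by
  classical
  set i₀ : Fin m := ⟨0, hm⟩ with hi₀
  -- the two indicator functions on ℝ × ℝ
  set φf : ℝ × ℝ → ℝ := fun z => (if z.1 ≤ α then (1:ℝ) else 0) * z.2 with hφf
  set ψf : ℝ × ℝ → ℝ := fun z => (if lam < z.1 ∧ z.1 ≤ α then (1:ℝ) else 0) * z.2 with hψf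
  have hφm : Measurable φf :=
    (Measurable.ite (measurableSet_le measurable_fst measurable_const)
      measurable_const measurable_const).mul measurable_snd
  have hψm : Measurable ψf :=
    (Measurable.ite ((measurableSet_lt measurable_const measurable_fst).inter
      (measurableSet_le measurable_fst measurable_const))
      measurable_const measurable_const).mul measurable_snd
  set X : Fin m → Ω → ℝ := fun i ω => φf (P i ω, D i ω) with hXdef
  set Y : Fin m → Ω → ℝ := fun i ω => ψf (P i ω, D i ω) with hYdef
  have hVmeas : ∀ i, Measurable (fun ω => (P i ω, D i ω)) :=
    fun i => (hPmeas i).prodMk (hDmeas i)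
  have hXm : ∀ i, Measurable (X i) := fun i => hφm.comp (hVmeas i)
  have hYm : ∀ i, Measurable (Y i) := fun i => hψm.comp (hVmeas i)
  -- rewrite the statement's sums in terms of X and Y
  have hX' : ∀ i ω, (if 0 ≤ P i ω ∧ P i ω ≤ α then (1:ℝ) else 0) * D i ω = X i ω := by
    intro i ω
    have h0 : 0 ≤ P i ω := (hP01 i ω).1
    simp [hXdef, hφf, h0]
  have hY' : ∀ i ω, (if lam < P i ω ∧ P i ω ≤ α then (1:ℝ) else 0) * D i ω = Y i ω := by
    intro i ω; rfl
  simp only [hX', hY']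
  -- 0/1 values
  have hX01 : ∀ i ω, X i ω = 0 ∨ X i ω = 1 := by
    intro i ω
    rcases hD01 i ω with h | h <;> by_cases hp : P i ω ≤ α <;>
      simp [hXdef, hφf, h, hp]
  have hY01 : ∀ i ω, Y i ω = 0 ∨ Y i ω = 1 := by
    intro i ω
    rcases hD01 i ω with h | h <;> by_cases hp : lam < P i ω ∧ P i ω ≤ α <;>
      simp [hYdef, hψf, h, hp]
  have hYX : ∀ i ω, Y i ω = 1 → X i ω = 1 := by
    intro i ω h
    have hψe : Y i ω = (if lam < P i ω ∧ P i ω ≤ α then (1:ℝ) else 0) * D i ω := rfl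
    have hφe : X i ω = (if P i ω ≤ α then (1:ℝ) else 0) * D i ω := rfl
    by_cases hp : lam < P i ω ∧ P i ω ≤ α
    · rw [hφe, if_pos hp.2, one_mul]
      rw [hψe, if_pos hp, one_mul] at h
      exact h
    · rw [hψe, if_neg hp, zero_mul] at h
      exact absurd h.symm one_ne_zero
  -- independence of each indicator from the sum over the other indices
  have hindgen : ∀ (g : ℝ × ℝ → ℝ), Measurable g → ∀ i : Fin m,
      IndepFun (fun ω => g (P i ω, D i ω))
        (fun ω => (1 + ∑ j ∈ Finset.univ.erase i, X j ω)⁻¹) Pr := by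
    intro g hg i
    set s : Finset (Fin m) := Finset.univ.erase i with hsdef
    have hdisj : Disjoint ({i} : Finset (Fin m)) s := by
      simp [hsdef, Finset.disjoint_left]
    have base := hindep.indepFun_finset {i} s hdisj hVmeas
    have hg1 : Measurable (fun v : ({i} : Finset (Fin m)) → ℝ × ℝ =>
        g (v ⟨i, Finset.mem_singleton_self i⟩)) := hg.comp (measurable_pi_apply _)
    have hg2 : Measurable (fun v : ↥s → ℝ × ℝ =>
        (1 + ∑ j : ↥s, φf (v j))⁻¹) :=
      (measurable_const.add (Finset.measurable_sum Finset.univ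
        (fun j _ => hφm.comp (measurable_pi_apply j)))).inv
    have h := base.comp hg1 hg2
    have e1 : (fun v : ({i} : Finset (Fin m)) → ℝ × ℝ =>
          g (v ⟨i, Finset.mem_singleton_self i⟩)) ∘
        (fun a (j : ({i} : Finset (Fin m))) => (P j a, D j a))
        = fun ω => g (P i ω, D i ω) := rfl
    have e2 : (fun v : ↥s → ℝ × ℝ => (1 + ∑ j : ↥s, φf (v j))⁻¹) ∘
        (fun a (j : ↥s) => (P j a, D j a))
        = fun ω => (1 + ∑ j ∈ s, X j ω)⁻¹ := by
      funext a
      simp only [Function.comp_apply]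
      rw [Finset.sum_coe_sort s (fun j => X j a)]
    rw [e1, e2] at h
    exact h
  have hindY : ∀ i, IndepFun (Y i)
      (fun ω => (1 + ∑ j ∈ Finset.univ.erase i, X j ω)⁻¹) Pr :=
    fun i => hindgen ψf hψm i
  have hindX : ∀ i, IndepFun (X i)
      (fun ω => (1 + ∑ j ∈ Finset.univ.erase i, X j ω)⁻¹) Pr :=
    fun i => hindgen φf hφm i
  -- identical distribution gives constant expectations
  have hXconst : ∀ i, ∫ ω, X i ω ∂Pr = ∫ ω, X i₀ ω ∂Pr :=
    fun i => ((hident i).comp hφm).integral_eq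
  have hYconst : ∀ i, ∫ ω, Y i ω ∂Pr = ∫ ω, Y i₀ ω ∂Pr :=
    fun i => ((hident i).comp hψm).integral_eq
  -- sets
  set B : Set Ω := {ω | P i₀ ω ≤ α ∧ D i₀ ω = 1} with hB
  set C : Set Ω := {ω | lam < P i₀ ω ∧ P i₀ ω ≤ α} with hC
  set N : Set Ω := {ω | lam < P i₀ ω ∧ P i₀ ω ≤ α ∧ D i₀ ω = 1} with hN
  have measB : MeasurableSet B :=
    (measurableSet_le (hPmeas i₀) measurable_const).inter
      ((hDmeas i₀) (measurableSet_singleton 1))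
  have measN : MeasurableSet N :=
    (measurableSet_lt measurable_const (hPmeas i₀)).inter
      ((measurableSet_le (hPmeas i₀) measurable_const).inter
        ((hDmeas i₀) (measurableSet_singleton 1)))
  have hBC : B ∩ C = N := by
    ext ω; simp only [hB, hC, hN, Set.mem_inter_iff, Set.mem_setOf_eq]; tauto
  -- identify the expectations with probabilities
  have hXind : (fun ω => X i₀ ω) = B.indicator (1 : Ω → ℝ) := by
    funext ω
    rcases hD01 i₀ ω with h | h <;> by_cases hp : P i₀ ω ≤ α <;>
      simp [hXdef, hφf, hB, Set.indicator_apply, h, hp]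
  have hYind : (fun ω => Y i₀ ω) = N.indicator (1 : Ω → ℝ) := by
    funext ω
    rcases hD01 i₀ ω with h | h <;> by_cases hp : lam < P i₀ ω ∧ P i₀ ω ≤ α <;>
      simp [hYdef, hψf, hN, Set.indicator_apply, h, hp] <;> tauto
  have hXint : ∫ ω, X i₀ ω ∂Pr = (Pr B).toReal := by
    rw [hXind]; exact integral_indicator_one measB
  have hYint : ∫ ω, Y i₀ ω ∂Pr = (Pr N).toReal := by
    rw [hYind]; exact integral_indicator_one measN
  set pX : ℝ := (Pr B).toReal with hpXd
  set pY : ℝ := (Pr N).toReal with hpYd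
  have hpXpos : 0 < pX := ENNReal.toReal_pos hpos.ne' (measure_ne_top _ _)
  -- the conditioning event
  set A : Set Ω := {ω | 0 < ∑ i, X i ω} with hA
  have measA : MeasurableSet A :=
    measurableSet_lt measurable_const (Finset.measurable_sum _ fun i _ => hXm i)
  have hBA : B ⊆ A := by
    intro ω hω
    have hx : X i₀ ω = 1 := by
      rw [show X i₀ ω = (if P i₀ ω ≤ α then (1:ℝ) else 0) * D i₀ ω from rfl,
        if_pos hω.1, one_mul]
      exact hω.2
    have : X i₀ ω ≤ ∑ i, X i ω :=
      Finset.single_le_sum (f := fun j => X j ω)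
        (fun j _ => by rcases hX01 j ω with h | h <;> simp [h])
        (Finset.mem_univ i₀)
    simp only [hA, Set.mem_setOf_eq]
    rw [hx] at this; linarith
  have hApos : 0 < Pr A := lt_of_lt_of_le hpos (measure_mono hBA)
  have hAtop : Pr A ≠ ⊤ := measure_ne_top _ _
  have hARpos : 0 < (Pr A).toReal := ENNReal.toReal_pos hApos.ne' hAtop
  -- the key expectation identity
  have hmain : ∫ ω in A, (∑ i, Y i ω) / (∑ i, X i ω) ∂Pr = pY / pX * (Pr A).toReal :=
    fdr_aux_count_ratio Pr X Y hXm hYm hX01 hY01 hYX hindY hindX pX pY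
      (fun i => (hXconst i).trans hXint) (fun i => (hYconst i).trans hYint) hpXpos
  -- compute the left-hand side
  have hLHS : ∫ ω, (α / (α - lam)) * ((∑ i, Y i ω) / (∑ i, X i ω))
      ∂(ProbabilityTheory.cond Pr A)
      = ((Pr A)⁻¹).toReal * ((α / (α - lam)) * (pY / pX * (Pr A).toReal)) := by
    rw [ProbabilityTheory.cond, integral_smul_measure, smul_eq_mul,
      integral_const_mul, hmain]
  rw [hLHS, ProbabilityTheory.cond_apply measB, hBC,
    ENNReal.toReal_mul, ENNReal.toReal_inv, ENNReal.toReal_inv, ← hpXd, ← hpYd]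
  have hR : (Pr A).toReal ≠ 0 := ne_of_gt hARpos
  field_simp
end

section
/- Fix π₀ ∈ (0,1), 0 ≤ λ < α < 1, a constant c > 0, a measurable nonincreasing function μ : [0,1] → [0,∞) with c·μ(p) ≤ 1 for all p, and a measurable nonnegative f₁ : [0,1] → [0,∞) with ∫₀¹ f₁(t) dt = 1. Set f(t) = π₀ + (1−π₀) f₁(t) and assume ∫₀^α μ(t) f(t) dt > 0. Let (H_1, P_1, δ_1), ..., (H_m, P_m, δ_m) be i.i.d. with common law ν on {0,1} × [0,1] × {0,1} having density g(h,p,d) = [π₀·1{h=0} + (1−π₀)·f₁(p)·1{h=1}] · (c·μ(p))^d · (1 − c·μ(p))^{1−d} with respect to the product of counting, Lebesgue, and counting measures. Define FDR̂ = (α/(α−λ)) · (Σ 1_{(λ,α]}(P_i) δ_i) / (Σ 1_{[0,α]}(P_i) δ_i). Then E[FDR̂ | Σ 1_{[0,α]}(P_i) δ_i > 0] − Pr(H_1 = 0 | δ_1 = 1, P_1 ≤ α) = [ (α/(α−λ)) ∫_λ^α μ(t) f(t) dt − π₀ ∫₀^α μ(t) dt ] / ∫₀^α μ(t) f(t) dt.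 -/
open MeasureTheory ProbabilityTheory

lemma nu_eval (ρ : Fin 2 × ℝ × Fin 2 → ENNReal) (hρ : Measurable ρ)
    (S : Set (Fin 2 × ℝ × Fin 2)) (hS : MeasurableSet S) :
    (((Measure.count : Measure (Fin 2)).prod
        (((volume.restrict (Set.Icc (0 : ℝ) 1)).prod
          (Measure.count : Measure (Fin 2))))).withDensity ρ) S
    = ∫⁻ p in Set.Icc (0:ℝ) 1,
        (S.indicator ρ (0, (p, 0)) + S.indicator ρ (0, (p, 1))
         + (S.indicator ρ (1, (p, 0)) + S.indicator ρ (1, (p, 1)))) := by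
  have mρ : Measurable (S.indicator ρ) := hρ.indicator hS
  rw [withDensity_apply _ hS, ← lintegral_indicator hS _]
  rw [MeasureTheory.lintegral_prod _ mρ.aemeasurable, lintegral_count, tsum_fintype,
    Fin.sum_univ_two]
  have inner : ∀ h : Fin 2, ∫⁻ (z : ℝ × Fin 2), S.indicator ρ (h, z)
      ∂((volume.restrict (Set.Icc (0:ℝ) 1)).prod Measure.count)
      = ∫⁻ p in Set.Icc (0:ℝ) 1, (S.indicator ρ (h,(p,0)) + S.indicator ρ (h,(p,1))) := by
    intro h
    rw [MeasureTheory.lintegral_prod]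
    · refine lintegral_congr fun p => ?_
      rw [lintegral_count, tsum_fintype, Fin.sum_univ_two]
    · exact (mρ.comp measurable_prodMk_left).aemeasurable
  rw [inner 0, inner 1, ← lintegral_add_left]
  exact (mρ.comp (by fun_prop)).add (mρ.comp (by fun_prop))

lemma dens_meas (π₀ c : ℝ) (μ f₁ : ℝ → ℝ) (hμ : Measurable μ) (hf₁ : Measurable f₁) :
    Measurable (fun x : Fin 2 × ℝ × Fin 2 => ENNReal.ofReal
      (((if x.1 = 0 then π₀ else (1 - π₀) * f₁ x.2.1)) *
        (if x.2.2 = 1 then c * μ x.2.1 else 1 - c * μ x.2.1))) := by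
  have h1 : MeasurableSet {x : Fin 2 × ℝ × Fin 2 | x.1 = 0} :=
    (measurableSet_singleton (0 : Fin 2)).preimage measurable_fst
  have h2 : MeasurableSet {x : Fin 2 × ℝ × Fin 2 | x.2.2 = 1} :=
    (measurableSet_singleton (1 : Fin 2)).preimage (measurable_snd.comp measurable_snd)
  apply Measurable.ennreal_ofReal
  exact Measurable.mul
    (Measurable.ite h1 measurable_const (measurable_const.mul (hf₁.comp (measurable_fst.comp measurable_snd))))
    (Measurable.ite h2 (measurable_const.mul (hμ.comp (measurable_fst.comp measurable_snd)))
      (measurable_const.sub (measurable_const.mul (hμ.comp (measurable_fst.comp measurable_snd)))))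

section
variable (π₀ c : ℝ) (μ f₁ f : ℝ → ℝ)

lemma nu_univ (hπ : π₀ ∈ Set.Ioo (0:ℝ) 1) (hc : 0 < c)
    (hμmeas : Measurable μ) (hf₁meas : Measurable f₁)
    (hμnonneg : ∀ p ∈ Set.Icc (0:ℝ) 1, 0 ≤ μ p)
    (hf₁nonneg : ∀ p ∈ Set.Icc (0:ℝ) 1, 0 ≤ f₁ p)
    (hf : f = fun t => π₀ + (1 - π₀) * f₁ t)
    (s : Set ℝ) (hs : MeasurableSet s) :
    (((Measure.count : Measure (Fin 2)).prod
        (((volume.restrict (Set.Icc (0 : ℝ) 1)).prod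
          (Measure.count : Measure (Fin 2))))).withDensity
        (fun x => ENNReal.ofReal
          (((if x.1 = 0 then π₀ else (1 - π₀) * f₁ x.2.1)) *
            (if x.2.2 = 1 then c * μ x.2.1 else 1 - c * μ x.2.1))))
      {x : Fin 2 × ℝ × Fin 2 | x.2.1 ∈ s ∧ x.2.2 = 1}
    = ∫⁻ p in s ∩ Set.Icc (0:ℝ) 1, ENNReal.ofReal (c * (μ p * f p)) := by
  have hS : MeasurableSet {x : Fin 2 × ℝ × Fin 2 | x.2.1 ∈ s ∧ x.2.2 = 1} :=
    (hs.preimage (measurable_fst.comp measurable_snd)).inter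
      ((measurableSet_singleton (1 : Fin 2)).preimage (measurable_snd.comp measurable_snd))
  set ρ : Fin 2 × ℝ × Fin 2 → ENNReal := (fun x => ENNReal.ofReal
          (((if x.1 = 0 then π₀ else (1 - π₀) * f₁ x.2.1)) *
            (if x.2.2 = 1 then c * μ x.2.1 else 1 - c * μ x.2.1))) with hρdef
  rw [nu_eval ρ (dens_meas π₀ c μ f₁ hμmeas hf₁meas) _ hS]
  have key : ∀ p : ℝ,
      ({x : Fin 2 × ℝ × Fin 2 | x.2.1 ∈ s ∧ x.2.2 = 1}.indicator ρ (0, (p, 0))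
        + {x : Fin 2 × ℝ × Fin 2 | x.2.1 ∈ s ∧ x.2.2 = 1}.indicator ρ (0, (p, 1))
        + ({x : Fin 2 × ℝ × Fin 2 | x.2.1 ∈ s ∧ x.2.2 = 1}.indicator ρ (1, (p, 0))
          + {x : Fin 2 × ℝ × Fin 2 | x.2.1 ∈ s ∧ x.2.2 = 1}.indicator ρ (1, (p, 1))))
      = s.indicator (fun p => ENNReal.ofReal (π₀ * (c * μ p))
          + ENNReal.ofReal ((1 - π₀) * f₁ p * (c * μ p))) p := by
    intro p
    by_cases hp : p ∈ s <;>
      simp [ρ, Set.indicator_apply, hp, Set.mem_setOf_eq]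
  rw [lintegral_congr key, lintegral_indicator hs, Measure.restrict_restrict hs]
  refine setLIntegral_congr_fun (hs.inter measurableSet_Icc) (fun p hp => ?_)
  have hμp := hμnonneg p hp.2
  have hf₁p := hf₁nonneg p hp.2
  have h1 : (0:ℝ) ≤ π₀ * (c * μ p) := mul_nonneg hπ.1.le (mul_nonneg hc.le hμp)
  have h2 : (0:ℝ) ≤ (1 - π₀) * f₁ p * (c * μ p) :=
    mul_nonneg (mul_nonneg (by linarith [hπ.2]) hf₁p) (mul_nonneg hc.le hμp)
  rw [← ENNReal.ofReal_add h1 h2]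
  congr 1
  rw [hf]; ring

lemma nu_null (hπ : π₀ ∈ Set.Ioo (0:ℝ) 1) (hc : 0 < c)
    (hμmeas : Measurable μ) (hf₁meas : Measurable f₁)
    (s : Set ℝ) (hs : MeasurableSet s) :
    (((Measure.count : Measure (Fin 2)).prod
        (((volume.restrict (Set.Icc (0 : ℝ) 1)).prod
          (Measure.count : Measure (Fin 2))))).withDensity
        (fun x => ENNReal.ofReal
          (((if x.1 = 0 then π₀ else (1 - π₀) * f₁ x.2.1)) *
            (if x.2.2 = 1 then c * μ x.2.1 else 1 - c * μ x.2.1))))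
      {x : Fin 2 × ℝ × Fin 2 | x.1 = 0 ∧ x.2.1 ∈ s ∧ x.2.2 = 1}
    = ∫⁻ p in s ∩ Set.Icc (0:ℝ) 1, ENNReal.ofReal (π₀ * (c * μ p)) := by
  have hS : MeasurableSet {x : Fin 2 × ℝ × Fin 2 | x.1 = 0 ∧ x.2.1 ∈ s ∧ x.2.2 = 1} :=
    ((measurableSet_singleton (0 : Fin 2)).preimage measurable_fst).inter
      ((hs.preimage (measurable_fst.comp measurable_snd)).inter
        ((measurableSet_singleton (1 : Fin 2)).preimage (measurable_snd.comp measurable_snd)))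
  set ρ : Fin 2 × ℝ × Fin 2 → ENNReal := (fun x => ENNReal.ofReal
          (((if x.1 = 0 then π₀ else (1 - π₀) * f₁ x.2.1)) *
            (if x.2.2 = 1 then c * μ x.2.1 else 1 - c * μ x.2.1))) with hρdef
  rw [nu_eval ρ (dens_meas π₀ c μ f₁ hμmeas hf₁meas) _ hS]
  have key : ∀ p : ℝ,
      ({x : Fin 2 × ℝ × Fin 2 | x.1 = 0 ∧ x.2.1 ∈ s ∧ x.2.2 = 1}.indicator ρ (0, (p, 0))
        + {x : Fin 2 × ℝ × Fin 2 | x.1 = 0 ∧ x.2.1 ∈ s ∧ x.2.2 = 1}.indicator ρ (0, (p, 1))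
        + ({x : Fin 2 × ℝ × Fin 2 | x.1 = 0 ∧ x.2.1 ∈ s ∧ x.2.2 = 1}.indicator ρ (1, (p, 0))
          + {x : Fin 2 × ℝ × Fin 2 | x.1 = 0 ∧ x.2.1 ∈ s ∧ x.2.2 = 1}.indicator ρ (1, (p, 1))))
      = s.indicator (fun p => ENNReal.ofReal (π₀ * (c * μ p))) p := by
    intro p
    by_cases hp : p ∈ s <;>
      simp [ρ, Set.indicator_apply, hp, Set.mem_setOf_eq]
  rw [lintegral_congr key, lintegral_indicator hs, Measure.restrict_restrict hs]
end

lemma lint_ofReal {s : Set ℝ} (hs : MeasurableSet s) (g : ℝ → ℝ)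
    (hint : IntegrableOn g s) (hnn : ∀ p ∈ s, 0 ≤ g p) :
    ∫⁻ p in s, ENNReal.ofReal (g p) = ENNReal.ofReal (∫ p in s, g p) :=
  (MeasureTheory.ofReal_integral_eq_lintegral_ofReal hint
    ((ae_restrict_iff' hs).2 (ae_of_all _ hnn))).symm

lemma integrable_of_bdd {Ω : Type*} [MeasurableSpace Ω] {Pr : Measure Ω} [IsFiniteMeasure Pr]
    {g : Ω → ℝ} (M : ℝ) (hg : Measurable g) (hb : ∀ ω, |g ω| ≤ M) : Integrable g Pr :=
  (integrable_const M).mono' hg.aestronglyMeasurable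
    (ae_of_all _ fun ω => by simpa [Real.norm_eq_abs] using hb ω)

/-- **Theorem 2 of the paper: bias of the post-selection FDR estimator.**
For i.i.d. triples `(Hᵢ, Pᵢ, δᵢ)` with common law `ν` (mixture model with prior null
probability `π₀`, alternative density `f₁`, selection model `Pr(δ=1∣P=p)=c·μ(p)`),
the bias of `FDR̂ = (α/(α−λ)) ∑ 1_{(λ,α]}(Pᵢ)δᵢ / ∑ 1_{[0,α]}(Pᵢ)δᵢ` equals
`[(α/(α−λ)) ∫_λ^α μ f − π₀ ∫₀^α μ] / ∫₀^α μ f`. -/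
theorem bias_fdr_estimator
    {Ω : Type*} [MeasurableSpace Ω] (Pr : Measure Ω) [IsProbabilityMeasure Pr]
    (π₀ lam α c : ℝ) (hπ : π₀ ∈ Set.Ioo (0 : ℝ) 1)
    (hlam : 0 ≤ lam) (hla : lam < α) (hα : α < 1) (hc : 0 < c)
    (μ : ℝ → ℝ) (hμmeas : Measurable μ)
    (hμnonneg : ∀ p ∈ Set.Icc (0 : ℝ) 1, 0 ≤ μ p)
    (hμanti : AntitoneOn μ (Set.Icc (0 : ℝ) 1))
    (hcμ : ∀ p ∈ Set.Icc (0 : ℝ) 1, c * μ p ≤ 1)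
    (f₁ : ℝ → ℝ) (hf₁meas : Measurable f₁)
    (hf₁nonneg : ∀ t ∈ Set.Icc (0 : ℝ) 1, 0 ≤ f₁ t)
    (hf₁int : ∫ t in (0 : ℝ)..1, f₁ t = 1)
    (f : ℝ → ℝ) (hf : f = fun t => π₀ + (1 - π₀) * f₁ t)
    (hpos : 0 < ∫ t in (0 : ℝ)..α, μ t * f t)
    (ν : Measure (Fin 2 × ℝ × Fin 2))
    (hν : ν = ((Measure.count : Measure (Fin 2)).prod
        (((volume.restrict (Set.Icc (0 : ℝ) 1)).prod
          (Measure.count : Measure (Fin 2))))).withDensity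
        (fun x => ENNReal.ofReal
          (((if x.1 = 0 then π₀ else (1 - π₀) * f₁ x.2.1)) *
            (if x.2.2 = 1 then c * μ x.2.1 else 1 - c * μ x.2.1))))
    (m : ℕ) (hm : 0 < m)
    (X : Fin m → Ω → Fin 2 × ℝ × Fin 2)
    (hXmeas : ∀ i, Measurable (X i))
    (hindep : iIndepFun X Pr)
    (hlaw : ∀ i, Measure.map (X i) Pr = ν) :
    (∫ ω, (α / (α - lam)) *
        ((∑ i, (if lam < (X i ω).2.1 ∧ (X i ω).2.1 ≤ α ∧ (X i ω).2.2 = 1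
            then (1 : ℝ) else 0)) /
          (∑ i, (if 0 ≤ (X i ω).2.1 ∧ (X i ω).2.1 ≤ α ∧ (X i ω).2.2 = 1
            then (1 : ℝ) else 0)))
        ∂(ProbabilityTheory.cond Pr
          {ω | 0 < ∑ i, (if 0 ≤ (X i ω).2.1 ∧ (X i ω).2.1 ≤ α ∧ (X i ω).2.2 = 1
            then (1 : ℝ) else 0)}))
      - (ProbabilityTheory.cond Pr
          {ω | (X ⟨0, hm⟩ ω).2.2 = 1 ∧ (X ⟨0, hm⟩ ω).2.1 ≤ α}
          {ω | (X ⟨0, hm⟩ ω).1 = 0}).toReal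
      = ((α / (α - lam)) * (∫ t in lam..α, μ t * f t)
          - π₀ * (∫ t in (0 : ℝ)..α, μ t)) /
        (∫ t in (0 : ℝ)..α, μ t * f t) := by
  obtain ⟨hπ0, hπ1⟩ := hπ
  have h1π : (0:ℝ) ≤ 1 - π₀ := by linarith
  have hα0 : 0 < α := hlam.trans_lt hla
  have hfnn : ∀ p ∈ Set.Icc (0:ℝ) 1, 0 ≤ f p := fun p hp => by
    rw [hf]; exact add_nonneg hπ0.le (mul_nonneg h1π (hf₁nonneg p hp))
  -- measurability of coordinate maps and sets
  have hm21 : Measurable (fun x : Fin 2 × ℝ × Fin 2 => x.2.1) :=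
    measurable_fst.comp measurable_snd
  have hm22 : Measurable (fun x : Fin 2 × ℝ × Fin 2 => x.2.2) :=
    measurable_snd.comp measurable_snd
  have hmSa : MeasurableSet {x : Fin 2 × ℝ × Fin 2 | lam < x.2.1 ∧ x.2.1 ≤ α ∧ x.2.2 = 1} :=
    (measurableSet_lt measurable_const hm21).inter
      ((measurableSet_le hm21 measurable_const).inter (hm22 (measurableSet_singleton 1)))
  have hmSb : MeasurableSet {x : Fin 2 × ℝ × Fin 2 | 0 ≤ x.2.1 ∧ x.2.1 ≤ α ∧ x.2.2 = 1} :=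
    (measurableSet_le measurable_const hm21).inter
      ((measurableSet_le hm21 measurable_const).inter (hm22 (measurableSet_singleton 1)))
  have hmSb' : MeasurableSet {x : Fin 2 × ℝ × Fin 2 | x.2.2 = 1 ∧ x.2.1 ≤ α} :=
    (hm22 (measurableSet_singleton 1)).inter (measurableSet_le hm21 measurable_const)
  -- integrability facts
  have hf₁Icc : IntegrableOn f₁ (Set.Icc (0:ℝ) 1) := by
    have h : IntervalIntegrable f₁ volume 0 1 := by
      by_contra h
      rw [intervalIntegral.integral_undef h] at hf₁int
      exact one_ne_zero hf₁int.symm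
    rw [integrableOn_Icc_iff_integrableOn_Ioc]
    exact (intervalIntegrable_iff_integrableOn_Ioc_of_le (by norm_num)).1 h
  have hμbd : ∀ p ∈ Set.Icc (0:ℝ) 1, μ p ≤ μ 0 := fun p hp =>
    hμanti (Set.left_mem_Icc.2 one_pos.le) hp hp.1
  have hμIcc : IntegrableOn μ (Set.Icc (0:ℝ) 1) := by
    refine Measure.integrableOn_of_bounded (M := μ 0) (by simp) hμmeas.aestronglyMeasurable
      ((ae_restrict_iff' measurableSet_Icc).2 (ae_of_all _ fun p hp => ?_))
    rw [Real.norm_eq_abs, abs_of_nonneg (hμnonneg p hp)]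
    exact hμbd p hp
  have hμf₁Icc : IntegrableOn (fun p => μ p * f₁ p) (Set.Icc (0:ℝ) 1) := by
    refine (hf₁Icc.const_mul (μ 0)).mono' (hμmeas.mul hf₁meas).aestronglyMeasurable
      ((ae_restrict_iff' measurableSet_Icc).2 (ae_of_all _ fun p hp => ?_))
    rw [Real.norm_eq_abs, abs_of_nonneg (mul_nonneg (hμnonneg p hp) (hf₁nonneg p hp))]
    exact mul_le_mul_of_nonneg_right (hμbd p hp) (hf₁nonneg p hp)
  have hGIcc : IntegrableOn (fun p => c * (μ p * f p)) (Set.Icc (0:ℝ) 1) := by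
    have hre : (fun p => c * (μ p * f p))
        = fun p => (c * π₀) * μ p + (c * (1 - π₀)) * (μ p * f₁ p) :=
      funext fun p => by rw [hf]; ring
    rw [hre]
    exact (hμIcc.const_mul _).add (hμf₁Icc.const_mul _)
  have hsub1 : Set.Ioc lam α ⊆ Set.Icc (0:ℝ) 1 :=
    fun p hp => ⟨hlam.trans hp.1.le, hp.2.trans hα.le⟩
  have hsub2 : Set.Icc (0:ℝ) α ⊆ Set.Icc (0:ℝ) 1 := Set.Icc_subset_Icc le_rfl hα.le
  -- nonnegativity of the integrals
  have hIlamnn : 0 ≤ ∫ t in lam..α, μ t * f t := by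
    refine intervalIntegral.integral_nonneg hla.le fun u hu => ?_
    have hu' : u ∈ Set.Icc (0:ℝ) 1 := ⟨hlam.trans hu.1, hu.2.trans hα.le⟩
    exact mul_nonneg (hμnonneg u hu') (hfnn u hu')
  have hJnn : 0 ≤ ∫ t in (0:ℝ)..α, μ t := by
    refine intervalIntegral.integral_nonneg hα0.le fun u hu => ?_
    exact hμnonneg u ⟨hu.1, hu.2.trans hα.le⟩
  have hIne : (∫ t in (0:ℝ)..α, μ t * f t) ≠ 0 := ne_of_gt hpos
  -- values of ν on the relevant sets
  have hνa : ν {x : Fin 2 × ℝ × Fin 2 | lam < x.2.1 ∧ x.2.1 ≤ α ∧ x.2.2 = 1}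
      = ENNReal.ofReal (c * ∫ t in lam..α, μ t * f t) := by
    have hseta : {x : Fin 2 × ℝ × Fin 2 | lam < x.2.1 ∧ x.2.1 ≤ α ∧ x.2.2 = 1}
        = {x : Fin 2 × ℝ × Fin 2 | x.2.1 ∈ Set.Ioc lam α ∧ x.2.2 = 1} := by
      ext x; simp [Set.mem_Ioc, and_assoc]
    rw [hseta, hν, nu_univ π₀ c μ f₁ f ⟨hπ0, hπ1⟩ hc hμmeas hf₁meas hμnonneg hf₁nonneg hf _
      measurableSet_Ioc, Set.inter_eq_left.2 hsub1,
      lint_ofReal measurableSet_Ioc _ (hGIcc.mono_set hsub1)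
        (fun p hp => mul_nonneg hc.le
          (mul_nonneg (hμnonneg p (hsub1 hp)) (hfnn p (hsub1 hp)))),
      MeasureTheory.integral_const_mul, ← intervalIntegral.integral_of_le hla.le]
  have hνb : ν {x : Fin 2 × ℝ × Fin 2 | 0 ≤ x.2.1 ∧ x.2.1 ≤ α ∧ x.2.2 = 1}
      = ENNReal.ofReal (c * ∫ t in (0:ℝ)..α, μ t * f t) := by
    have hsetb : {x : Fin 2 × ℝ × Fin 2 | 0 ≤ x.2.1 ∧ x.2.1 ≤ α ∧ x.2.2 = 1}
        = {x : Fin 2 × ℝ × Fin 2 | x.2.1 ∈ Set.Icc 0 α ∧ x.2.2 = 1} := by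
      ext x; simp [Set.mem_Icc, and_assoc]
    rw [hsetb, hν, nu_univ π₀ c μ f₁ f ⟨hπ0, hπ1⟩ hc hμmeas hf₁meas hμnonneg hf₁nonneg hf _
      measurableSet_Icc, Set.inter_eq_left.2 hsub2,
      lint_ofReal measurableSet_Icc _ (hGIcc.mono_set hsub2)
        (fun p hp => mul_nonneg hc.le
          (mul_nonneg (hμnonneg p (hsub2 hp)) (hfnn p (hsub2 hp)))),
      MeasureTheory.integral_const_mul, MeasureTheory.integral_Icc_eq_integral_Ioc,
      ← intervalIntegral.integral_of_le hα0.le]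
  have hνb' : ν {x : Fin 2 × ℝ × Fin 2 | x.2.2 = 1 ∧ x.2.1 ≤ α}
      = ENNReal.ofReal (c * ∫ t in (0:ℝ)..α, μ t * f t) := by
    have hsetb' : {x : Fin 2 × ℝ × Fin 2 | x.2.2 = 1 ∧ x.2.1 ≤ α}
        = {x : Fin 2 × ℝ × Fin 2 | x.2.1 ∈ Set.Iic α ∧ x.2.2 = 1} := by
      ext x; simp [Set.mem_Iic, and_comm]
    have hiic : Set.Iic α ∩ Set.Icc (0:ℝ) 1 = Set.Icc 0 α := by
      ext p
      constructor
      · rintro ⟨h1, h2, _⟩; exact ⟨h2, h1⟩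
      · rintro ⟨h1, h2⟩; exact ⟨h2, h1, h2.trans hα.le⟩
    rw [hsetb', hν, nu_univ π₀ c μ f₁ f ⟨hπ0, hπ1⟩ hc hμmeas hf₁meas hμnonneg hf₁nonneg hf _
      measurableSet_Iic, hiic,
      lint_ofReal measurableSet_Icc _ (hGIcc.mono_set hsub2)
        (fun p hp => mul_nonneg hc.le
          (mul_nonneg (hμnonneg p (hsub2 hp)) (hfnn p (hsub2 hp)))),
      MeasureTheory.integral_const_mul, MeasureTheory.integral_Icc_eq_integral_Ioc,
      ← intervalIntegral.integral_of_le hα0.le]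
  have hνbH : ν ({x : Fin 2 × ℝ × Fin 2 | x.2.2 = 1 ∧ x.2.1 ≤ α}
        ∩ {x : Fin 2 × ℝ × Fin 2 | x.1 = 0})
      = ENNReal.ofReal (π₀ * c * ∫ t in (0:ℝ)..α, μ t) := by
    have hset : {x : Fin 2 × ℝ × Fin 2 | x.2.2 = 1 ∧ x.2.1 ≤ α}
        ∩ {x : Fin 2 × ℝ × Fin 2 | x.1 = 0}
        = {x : Fin 2 × ℝ × Fin 2 | x.1 = 0 ∧ x.2.1 ∈ Set.Iic α ∧ x.2.2 = 1} := by
      ext x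
      simp only [Set.mem_inter_iff, Set.mem_setOf_eq, Set.mem_Iic]
      tauto
    have hiic : Set.Iic α ∩ Set.Icc (0:ℝ) 1 = Set.Icc 0 α := by
      ext p
      constructor
      · rintro ⟨h1, h2, _⟩; exact ⟨h2, h1⟩
      · rintro ⟨h1, h2⟩; exact ⟨h2, h1, h2.trans hα.le⟩
    have hint : IntegrableOn (fun p => π₀ * (c * μ p)) (Set.Icc (0:ℝ) α) := by
      have h := (hμIcc.mono_set hsub2).const_mul (π₀ * c)
      simpa [mul_assoc, IntegrableOn] using h
    rw [hset, hν, nu_null π₀ c μ f₁ ⟨hπ0, hπ1⟩ hc hμmeas hf₁meas _ measurableSet_Iic, hiic,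
      lint_ofReal measurableSet_Icc _ hint
        (fun p hp => mul_nonneg hπ0.le (mul_nonneg hc.le (hμnonneg p (hsub2 hp))))]
    congr 1
    simp_rw [← mul_assoc]
    rw [MeasureTheory.integral_const_mul, MeasureTheory.integral_Icc_eq_integral_Ioc,
      ← intervalIntegral.integral_of_le hα0.le]
  
  -- transfer Pr to ν
  have hmap : ∀ (i : Fin m) (S : Set (Fin 2 × ℝ × Fin 2)), MeasurableSet S →
      Pr (X i ⁻¹' S) = ν S := fun i S hS => by
    rw [← hlaw i, Measure.map_apply (hXmeas i) hS]
  have hmH : MeasurableSet {x : Fin 2 × ℝ × Fin 2 | x.1 = 0} :=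
    measurable_fst (measurableSet_singleton 0)
  -- the second term
  have hsecond : (ProbabilityTheory.cond Pr
        {ω | (X ⟨0, hm⟩ ω).2.2 = 1 ∧ (X ⟨0, hm⟩ ω).2.1 ≤ α}
        {ω | (X ⟨0, hm⟩ ω).1 = 0}).toReal
      = π₀ * (∫ t in (0:ℝ)..α, μ t) / (∫ t in (0:ℝ)..α, μ t * f t) := by
    have hpre1 : {ω | (X ⟨0, hm⟩ ω).2.2 = 1 ∧ (X ⟨0, hm⟩ ω).2.1 ≤ α}
        = X ⟨0, hm⟩ ⁻¹' {x : Fin 2 × ℝ × Fin 2 | x.2.2 = 1 ∧ x.2.1 ≤ α} := rfl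
    have hpre2 : {ω | (X ⟨0, hm⟩ ω).1 = 0}
        = X ⟨0, hm⟩ ⁻¹' {x : Fin 2 × ℝ × Fin 2 | x.1 = 0} := rfl
    rw [hpre1, hpre2, ProbabilityTheory.cond_apply (hmSb'.preimage (hXmeas _)) Pr,
      ← Set.preimage_inter, hmap _ _ (hmSb'.inter hmH), hmap _ _ hmSb', hνb', hνbH,
      ENNReal.toReal_mul, ENNReal.toReal_inv,
      ENNReal.toReal_ofReal (mul_nonneg hc.le hpos.le),
      ENNReal.toReal_ofReal (mul_nonneg (mul_nonneg hπ0.le hc.le) hJnn)]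
    field_simp
  -- the first term
  have hfirst : (∫ ω, (α / (α - lam)) *
        ((∑ i, (if lam < (X i ω).2.1 ∧ (X i ω).2.1 ≤ α ∧ (X i ω).2.2 = 1
            then (1 : ℝ) else 0)) /
          (∑ i, (if 0 ≤ (X i ω).2.1 ∧ (X i ω).2.1 ≤ α ∧ (X i ω).2.2 = 1
            then (1 : ℝ) else 0)))
        ∂(ProbabilityTheory.cond Pr
          {ω | 0 < ∑ i, (if 0 ≤ (X i ω).2.1 ∧ (X i ω).2.1 ≤ α ∧ (X i ω).2.2 = 1
            then (1 : ℝ) else 0)}))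
      = (α / (α - lam)) * ((c * ∫ t in lam..α, μ t * f t)
          / (c * ∫ t in (0:ℝ)..α, μ t * f t)) := by
    set A : Fin m → Ω → ℝ := fun i ω =>
      if lam < (X i ω).2.1 ∧ (X i ω).2.1 ≤ α ∧ (X i ω).2.2 = 1 then 1 else 0 with hA
    set B : Fin m → Ω → ℝ := fun i ω =>
      if 0 ≤ (X i ω).2.1 ∧ (X i ω).2.1 ≤ α ∧ (X i ω).2.2 = 1 then 1 else 0 with hB
    set SB : Ω → ℝ := fun ω => ∑ i, B i ω with hSB
    set C : Set Ω := {ω | 0 < SB ω} with hC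
    set hfn : ℝ → ℝ := fun s => if 0 < s then s⁻¹ else 0 with hhfn
    set T : Fin m → Ω → ℝ := fun i ω => ∑ j ∈ Finset.univ.erase i, B j ω with hT
    show (∫ ω, (α / (α - lam)) * ((∑ i, A i ω) / SB ω) ∂(ProbabilityTheory.cond Pr C))
      = (α / (α - lam)) * ((c * ∫ t in lam..α, μ t * f t)
          / (c * ∫ t in (0:ℝ)..α, μ t * f t))
    -- basic pointwise facts
    have hBnn : ∀ i ω, 0 ≤ B i ω := fun i ω => by
      rw [hB]; dsimp only; split_ifs <;> norm_num
    have hAnn : ∀ i ω, 0 ≤ A i ω := fun i ω => by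
      rw [hA]; dsimp only; split_ifs <;> norm_num
    have hAle : ∀ i ω, |A i ω| ≤ 1 := fun i ω => by
      rw [hA]; dsimp only; split_ifs <;> norm_num
    have hBle : ∀ i ω, |B i ω| ≤ 1 := fun i ω => by
      rw [hB]; dsimp only; split_ifs <;> norm_num
    have hTnn : ∀ i ω, 0 ≤ T i ω := fun i ω => by
      rw [hT]; exact Finset.sum_nonneg fun j _ => hBnn j ω
    have hSBnn : ∀ ω, 0 ≤ SB ω := fun ω => Finset.sum_nonneg fun j _ => hBnn j ω
    have hkey : ∀ i ω, B i ω = 1 → SB ω = 1 + T i ω := by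
      intro i ω hBi
      rw [hSB, hT]
      dsimp only
      rw [← Finset.add_sum_erase Finset.univ (fun j => B j ω) (Finset.mem_univ i), hBi]
    have c2A : ∀ i ω, A i ω * hfn (SB ω) = A i ω * hfn (1 + T i ω) := by
      intro i ω
      by_cases hpa : lam < (X i ω).2.1 ∧ (X i ω).2.1 ≤ α ∧ (X i ω).2.2 = 1
      · have hpb : 0 ≤ (X i ω).2.1 ∧ (X i ω).2.1 ≤ α ∧ (X i ω).2.2 = 1 :=
          ⟨hlam.trans hpa.1.le, hpa.2⟩
        have hBi : B i ω = 1 := by rw [hB]; exact if_pos hpb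
        rw [hkey i ω hBi]
      · have hAi : A i ω = 0 := by rw [hA]; exact if_neg hpa
        rw [hAi, zero_mul, zero_mul]
    have c2B : ∀ i ω, B i ω * hfn (SB ω) = B i ω * hfn (1 + T i ω) := by
      intro i ω
      by_cases hpb : 0 ≤ (X i ω).2.1 ∧ (X i ω).2.1 ≤ α ∧ (X i ω).2.2 = 1
      · have hBi : B i ω = 1 := by rw [hB]; exact if_pos hpb
        rw [hkey i ω hBi]
      · have hBi : B i ω = 0 := by rw [hB]; exact if_neg hpb
        rw [hBi, zero_mul, zero_mul]
    -- measurability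
    have hAmeas : ∀ i, Measurable (A i) := fun i => by
      rw [hA]
      exact Measurable.ite (hmSa.preimage (hXmeas i)) measurable_const measurable_const
    have hBmeas : ∀ i, Measurable (B i) := fun i => by
      rw [hB]
      exact Measurable.ite (hmSb.preimage (hXmeas i)) measurable_const measurable_const
    have hSBmeas : Measurable SB := by
      rw [hSB]; exact Finset.measurable_sum _ fun i _ => hBmeas i
    have hCmeas : MeasurableSet C := by
      rw [hC]; exact measurableSet_lt measurable_const hSBmeas
    have hfnmeas : Measurable hfn := by
      rw [hhfn]
      exact Measurable.ite (measurableSet_lt measurable_const measurable_id)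
        measurable_inv measurable_const
    have hTmeas : ∀ i, Measurable (T i) := fun i => by
      rw [hT]; exact Finset.measurable_sum _ fun j _ => hBmeas j
    have hfnbd : ∀ i ω, |hfn (1 + T i ω)| ≤ 1 := by
      intro i ω
      have h1 : (1:ℝ) ≤ 1 + T i ω := by linarith [hTnn i ω]
      have h0 : (0:ℝ) < 1 + T i ω := by linarith
      rw [hhfn]
      dsimp only
      rw [if_pos h0, abs_of_nonneg (inv_nonneg.2 h0.le)]
      exact inv_le_one_of_one_le₀ h1
    -- integrability
    have hABint : ∀ i, Integrable (fun ω => A i ω * hfn (1 + T i ω)) Pr := fun i =>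
      integrable_of_bdd 1 ((hAmeas i).mul (hfnmeas.comp (measurable_const.add (hTmeas i))))
        (fun ω => by
          rw [abs_mul]
          exact mul_le_one₀ (hAle i ω) (abs_nonneg _) (hfnbd i ω))
    have hBBint : ∀ i, Integrable (fun ω => B i ω * hfn (1 + T i ω)) Pr := fun i =>
      integrable_of_bdd 1 ((hBmeas i).mul (hfnmeas.comp (measurable_const.add (hTmeas i))))
        (fun ω => by
          rw [abs_mul]
          exact mul_le_one₀ (hBle i ω) (abs_nonneg _) (hfnbd i ω))
    -- independence and factorization
    have hfactA : ∀ i, (∫ ω, A i ω * hfn (1 + T i ω) ∂Pr)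
        = (∫ ω, A i ω ∂Pr) * (∫ ω, hfn (1 + T i ω) ∂Pr) := by
      intro i
      have hsplit := hindep.indepFun_finset {i} (Finset.univ.erase i)
        (Finset.disjoint_singleton_left.2 (Finset.notMem_erase i _)) hXmeas
      have hφm : Measurable (fun v : ({i} : Finset (Fin m)) → (Fin 2 × ℝ × Fin 2) =>
          if lam < (v ⟨i, Finset.mem_singleton_self i⟩).2.1
            ∧ (v ⟨i, Finset.mem_singleton_self i⟩).2.1 ≤ α
            ∧ (v ⟨i, Finset.mem_singleton_self i⟩).2.2 = 1 then (1:ℝ) else 0) :=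
        Measurable.ite (hmSa.preimage (measurable_pi_apply _)) measurable_const
          measurable_const
      have hψm : Measurable (fun v : ((Finset.univ.erase i) : Finset (Fin m))
            → (Fin 2 × ℝ × Fin 2) =>
          hfn (1 + ∑ j, if 0 ≤ (v j).2.1 ∧ (v j).2.1 ≤ α ∧ (v j).2.2 = 1 then (1:ℝ) else 0)) :=
        hfnmeas.comp (measurable_const.add (Finset.measurable_sum _ fun j _ =>
          Measurable.ite (hmSb.preimage (measurable_pi_apply j)) measurable_const
            measurable_const))
      have hcomp := hsplit.comp hφm hψm
      have e1 : ((fun v : ({i} : Finset (Fin m)) → (Fin 2 × ℝ × Fin 2) =>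
          if lam < (v ⟨i, Finset.mem_singleton_self i⟩).2.1
            ∧ (v ⟨i, Finset.mem_singleton_self i⟩).2.1 ≤ α
            ∧ (v ⟨i, Finset.mem_singleton_self i⟩).2.2 = 1 then (1:ℝ) else 0)
          ∘ (fun ω (j : ({i} : Finset (Fin m))) => X j ω)) = A i := by
        funext ω
        simp only [Function.comp_apply, hA]
      have e2 : ((fun v : ((Finset.univ.erase i) : Finset (Fin m)) → (Fin 2 × ℝ × Fin 2) =>
          hfn (1 + ∑ j, if 0 ≤ (v j).2.1 ∧ (v j).2.1 ≤ α ∧ (v j).2.2 = 1 then (1:ℝ) else 0))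
          ∘ (fun ω (j : ((Finset.univ.erase i) : Finset (Fin m))) => X j ω))
          = fun ω => hfn (1 + T i ω) := by
        funext ω
        simp only [Function.comp_apply]
        congr 2
        rw [hT]
        dsimp only
        rw [← Finset.sum_coe_sort (Finset.univ.erase i)
          (fun j => if 0 ≤ (X j ω).2.1 ∧ (X j ω).2.1 ≤ α ∧ (X j ω).2.2 = 1 then (1:ℝ) else 0)]
      rw [e1, e2] at hcomp
      exact hcomp.integral_fun_mul_eq_mul_integral ((hAmeas i).aestronglyMeasurable)
        ((hfnmeas.comp (measurable_const.add (hTmeas i))).aestronglyMeasurable)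
    have hfactB : ∀ i, (∫ ω, B i ω * hfn (1 + T i ω) ∂Pr)
        = (∫ ω, B i ω ∂Pr) * (∫ ω, hfn (1 + T i ω) ∂Pr) := by
      intro i
      have hsplit := hindep.indepFun_finset {i} (Finset.univ.erase i)
        (Finset.disjoint_singleton_left.2 (Finset.notMem_erase i _)) hXmeas
      have hφm : Measurable (fun v : ({i} : Finset (Fin m)) → (Fin 2 × ℝ × Fin 2) =>
          if 0 ≤ (v ⟨i, Finset.mem_singleton_self i⟩).2.1
            ∧ (v ⟨i, Finset.mem_singleton_self i⟩).2.1 ≤ α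
            ∧ (v ⟨i, Finset.mem_singleton_self i⟩).2.2 = 1 then (1:ℝ) else 0) :=
        Measurable.ite (hmSb.preimage (measurable_pi_apply _)) measurable_const
          measurable_const
      have hψm : Measurable (fun v : ((Finset.univ.erase i) : Finset (Fin m))
            → (Fin 2 × ℝ × Fin 2) =>
          hfn (1 + ∑ j, if 0 ≤ (v j).2.1 ∧ (v j).2.1 ≤ α ∧ (v j).2.2 = 1 then (1:ℝ) else 0)) :=
        hfnmeas.comp (measurable_const.add (Finset.measurable_sum _ fun j _ =>
          Measurable.ite (hmSb.preimage (measurable_pi_apply j)) measurable_const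
            measurable_const))
      have hcomp := hsplit.comp hφm hψm
      have e1 : ((fun v : ({i} : Finset (Fin m)) → (Fin 2 × ℝ × Fin 2) =>
          if 0 ≤ (v ⟨i, Finset.mem_singleton_self i⟩).2.1
            ∧ (v ⟨i, Finset.mem_singleton_self i⟩).2.1 ≤ α
            ∧ (v ⟨i, Finset.mem_singleton_self i⟩).2.2 = 1 then (1:ℝ) else 0)
          ∘ (fun ω (j : ({i} : Finset (Fin m))) => X j ω)) = B i := by
        funext ω
        simp only [Function.comp_apply, hB]
      have e2 : ((fun v : ((Finset.univ.erase i) : Finset (Fin m)) → (Fin 2 × ℝ × Fin 2) =>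
          hfn (1 + ∑ j, if 0 ≤ (v j).2.1 ∧ (v j).2.1 ≤ α ∧ (v j).2.2 = 1 then (1:ℝ) else 0))
          ∘ (fun ω (j : ((Finset.univ.erase i) : Finset (Fin m))) => X j ω))
          = fun ω => hfn (1 + T i ω) := by
        funext ω
        simp only [Function.comp_apply]
        congr 2
        rw [hT]
        dsimp only
        rw [← Finset.sum_coe_sort (Finset.univ.erase i)
          (fun j => if 0 ≤ (X j ω).2.1 ∧ (X j ω).2.1 ≤ α ∧ (X j ω).2.2 = 1 then (1:ℝ) else 0)]
      rw [e1, e2] at hcomp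
      exact hcomp.integral_fun_mul_eq_mul_integral ((hBmeas i).aestronglyMeasurable)
        ((hfnmeas.comp (measurable_const.add (hTmeas i))).aestronglyMeasurable)
    -- expectations of the indicators
    have hIA : ∀ i, ∫ ω, A i ω ∂Pr
        = (ν {x : Fin 2 × ℝ × Fin 2 | lam < x.2.1 ∧ x.2.1 ≤ α ∧ x.2.2 = 1}).toReal := by
      intro i
      have hind : A i = (X i ⁻¹' {x : Fin 2 × ℝ × Fin 2 | lam < x.2.1 ∧ x.2.1 ≤ α ∧ x.2.2 = 1}).indicator
          (fun _ => (1:ℝ)) := by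
        funext ω
        by_cases h : lam < (X i ω).2.1 ∧ (X i ω).2.1 ≤ α ∧ (X i ω).2.2 = 1
        · rw [hA]
          exact (if_pos h).trans (Set.indicator_of_mem
            (show ω ∈ X i ⁻¹' {x : Fin 2 × ℝ × Fin 2 | lam < x.2.1 ∧ x.2.1 ≤ α ∧ x.2.2 = 1}
              from h) (fun _ => (1:ℝ))).symm
        · rw [hA]
          exact (if_neg h).trans (Set.indicator_of_notMem
            (show ω ∉ X i ⁻¹' {x : Fin 2 × ℝ × Fin 2 | lam < x.2.1 ∧ x.2.1 ≤ α ∧ x.2.2 = 1}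
              from h) (fun _ => (1:ℝ))).symm
      rw [hind, MeasureTheory.integral_indicator_const (1:ℝ) (hmSa.preimage (hXmeas i)),
        smul_eq_mul, mul_one, measureReal_def, hmap i _ hmSa]
    have hIB : ∀ i, ∫ ω, B i ω ∂Pr
        = (ν {x : Fin 2 × ℝ × Fin 2 | 0 ≤ x.2.1 ∧ x.2.1 ≤ α ∧ x.2.2 = 1}).toReal := by
      intro i
      have hind : B i = (X i ⁻¹' {x : Fin 2 × ℝ × Fin 2 | 0 ≤ x.2.1 ∧ x.2.1 ≤ α ∧ x.2.2 = 1}).indicator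
          (fun _ => (1:ℝ)) := by
        funext ω
        by_cases h : 0 ≤ (X i ω).2.1 ∧ (X i ω).2.1 ≤ α ∧ (X i ω).2.2 = 1
        · rw [hB]
          exact (if_pos h).trans (Set.indicator_of_mem
            (show ω ∈ X i ⁻¹' {x : Fin 2 × ℝ × Fin 2 | 0 ≤ x.2.1 ∧ x.2.1 ≤ α ∧ x.2.2 = 1}
              from h) (fun _ => (1:ℝ))).symm
        · rw [hB]
          exact (if_neg h).trans (Set.indicator_of_notMem
            (show ω ∉ X i ⁻¹' {x : Fin 2 × ℝ × Fin 2 | 0 ≤ x.2.1 ∧ x.2.1 ≤ α ∧ x.2.2 = 1}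
              from h) (fun _ => (1:ℝ))).symm
      rw [hind, MeasureTheory.integral_indicator_const (1:ℝ) (hmSb.preimage (hXmeas i)),
        smul_eq_mul, mul_one, measureReal_def, hmap i _ hmSb]
    -- real values
    have hνaR : (ν {x : Fin 2 × ℝ × Fin 2 | lam < x.2.1 ∧ x.2.1 ≤ α ∧ x.2.2 = 1}).toReal
        = c * ∫ t in lam..α, μ t * f t := by
      rw [hνa, ENNReal.toReal_ofReal (mul_nonneg hc.le hIlamnn)]
    have hνbR : (ν {x : Fin 2 × ℝ × Fin 2 | 0 ≤ x.2.1 ∧ x.2.1 ≤ α ∧ x.2.2 = 1}).toReal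
        = c * ∫ t in (0:ℝ)..α, μ t * f t := by
      rw [hνb, ENNReal.toReal_ofReal (mul_nonneg hc.le hpos.le)]
    -- rewrite the conditional integral
    rw [show ProbabilityTheory.cond Pr C = (Pr C)⁻¹ • Pr.restrict C from rfl,
      integral_smul_measure, ← integral_indicator hCmeas]
    have hptA : (C.indicator (fun ω => (α / (α - lam)) * ((∑ i, A i ω) / SB ω)))
        = fun ω => (α / (α - lam)) * ∑ i, A i ω * hfn (SB ω) := by
      funext ω
      by_cases h : 0 < SB ω
      · rw [Set.indicator_of_mem (show ω ∈ C from h)]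
        have hp : hfn (SB ω) = (SB ω)⁻¹ := by rw [hhfn]; exact if_pos h
        rw [← Finset.sum_mul, hp, div_eq_mul_inv (∑ i, A i ω) (SB ω)]
      · rw [Set.indicator_of_notMem (show ω ∉ C from h)]
        have hp : hfn (SB ω) = 0 := by rw [hhfn]; exact if_neg h
        rw [hp]
        simp
    rw [hptA]
    simp only [c2A]
    rw [MeasureTheory.integral_const_mul, integral_finset_sum _ (fun i _ => hABint i)]
    have hsumA : ∑ i, ∫ ω, A i ω * hfn (1 + T i ω) ∂Pr
        = (c * ∫ t in lam..α, μ t * f t) * ∑ i, ∫ ω, hfn (1 + T i ω) ∂Pr := by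
      rw [Finset.mul_sum]
      refine Finset.sum_congr rfl fun i _ => ?_
      rw [hfactA i, hIA i, hνaR]
    rw [hsumA]
    -- Pr C
    have hPC : (Pr C).toReal = (c * ∫ t in (0:ℝ)..α, μ t * f t)
        * ∑ i, ∫ ω, hfn (1 + T i ω) ∂Pr := by
      have h0 : (Pr C).toReal = ∫ ω, C.indicator (fun _ => (1:ℝ)) ω ∂Pr := by
        rw [MeasureTheory.integral_indicator_const (1:ℝ) hCmeas, smul_eq_mul, mul_one, measureReal_def]
      rw [h0]
      have hpt1 : (C.indicator (fun _ => (1:ℝ))) = fun ω => ∑ i, B i ω * hfn (SB ω) := by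
        funext ω
        by_cases h : 0 < SB ω
        · rw [Set.indicator_of_mem (show ω ∈ C from h)]
          have hp : hfn (SB ω) = (SB ω)⁻¹ := by rw [hhfn]; exact if_pos h
          rw [← Finset.sum_mul, hp, mul_inv_cancel₀ (ne_of_gt h)]
        · rw [Set.indicator_of_notMem (show ω ∉ C from h)]
          have hp : hfn (SB ω) = 0 := by rw [hhfn]; exact if_neg h
          rw [hp]
          simp
      rw [hpt1]
      simp only [c2B]
      rw [integral_finset_sum _ (fun i _ => hBBint i), Finset.mul_sum]
      refine Finset.sum_congr rfl fun i _ => ?_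
      rw [hfactB i, hIB i, hνbR]
    -- Pr C is positive
    have hPrC0 : Pr C ≠ 0 := by
      have hsubC : (X ⟨0,hm⟩ ⁻¹' {x : Fin 2 × ℝ × Fin 2 | 0 ≤ x.2.1 ∧ x.2.1 ≤ α ∧ x.2.2 = 1})
          ⊆ C := by
        intro ω hω
        have hB0 : B ⟨0,hm⟩ ω = 1 := by rw [hB]; exact if_pos hω
        show 0 < SB ω
        rw [hSB]
        dsimp only
        calc (0:ℝ) < 1 := one_pos
        _ = B ⟨0,hm⟩ ω := hB0.symm
        _ ≤ ∑ i, B i ω := Finset.single_le_sum (fun i _ => hBnn i ω) (Finset.mem_univ _)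
      intro h0
      have hz : Pr (X ⟨0,hm⟩ ⁻¹' {x : Fin 2 × ℝ × Fin 2 | 0 ≤ x.2.1 ∧ x.2.1 ≤ α ∧ x.2.2 = 1})
          = 0 :=
        le_antisymm (h0 ▸ measure_mono hsubC) (by simp)
      rw [hmap _ _ hmSb, hνb] at hz
      exact absurd hz (ENNReal.ofReal_pos.2 (mul_pos hc hpos)).ne'
    have hPCpos : 0 < (Pr C).toReal := ENNReal.toReal_pos hPrC0 (measure_ne_top _ _)
    have hcI : (0:ℝ) < c * ∫ t in (0:ℝ)..α, μ t * f t := mul_pos hc hpos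
    have hSK : ∑ i, ∫ ω, hfn (1 + T i ω) ∂Pr
        = (Pr C).toReal / (c * ∫ t in (0:ℝ)..α, μ t * f t) :=
      (eq_div_iff hcI.ne').2 (by rw [mul_comm]; exact hPC.symm)
    rw [ENNReal.toReal_inv, smul_eq_mul, hSK]
    have halg : ((Pr C).toReal)⁻¹ * ((α / (α - lam)) * ((c * ∫ t in lam..α, μ t * f t)
          * ((Pr C).toReal / (c * ∫ t in (0:ℝ)..α, μ t * f t))))
        = (((Pr C).toReal)⁻¹ * (Pr C).toReal) * ((α / (α - lam))
          * ((c * ∫ t in lam..α, μ t * f t) / (c * ∫ t in (0:ℝ)..α, μ t * f t))) := by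
      ring
    rw [halg, inv_mul_cancel₀ hPCpos.ne', one_mul]
  rw [hfirst, hsecond, mul_div_mul_left _ _ hc.ne', ← mul_div_assoc, div_sub_div_same]
end
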